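/- Let E ⊆ E' be finite edge sets on vertex set {1,...,n}, and let K ∈ ℕ^{E'}. If there exists a polynomial F in the span of {H_E^{K'} : K' ≤ K restricted to E, |K'| = |E'|} with ⟨F, Q_{E'}⟩ ≠ 0, then there exists F' in the span of {H_E^{K''} : K'' ≤ K restricted to E, |K''| = |E|} with ⟨F', Q_E⟩ ≠ 0. Here Q_E = ∏_{{i,j}∈E, i<j} (x_i − x_j), H_E^{K} = ∏_{{i,j}∈E, i<j} (x_i + x_j)^{K({i,j})}, and ⟨·,·⟩ is the inner product ⟨f,g⟩ = ∑_K K! coe(x^K,f) conj(coe(x^K,g)) on homogeneous polynomials. -/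

import Mathlib

open MvPolynomial ComplexConjugate

/-- `Q_E = ∏_{{i,j}∈E, i<j} (x_i − x_j)`, edges given as ordered pairs `(i,j)` with `i < j`. -/
noncomputable def Qpoly (n : ℕ) (S : Finset (Fin n × Fin n)) : MvPolynomial (Fin n) ℂ :=
  ∏ p ∈ S, (MvPolynomial.X p.1 - MvPolynomial.X p.2)

/-- `H_E^K = ∏_{{i,j}∈E, i<j} (x_i + x_j)^{K({i,j})}`. -/
noncomputable def Hpoly (n : ℕ) (S : Finset (Fin n × Fin n)) (K : Fin n × Fin n → ℕ) :
    MvPolynomial (Fin n) ℂ :=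
  ∏ p ∈ S, (MvPolynomial.X p.1 + MvPolynomial.X p.2) ^ K p

/-- `W_{E,m}^K`: the span of the `H_E^{K'}` for `K' ≤ K` supported on `E` with `|K'| = m`. -/
noncomputable def Wspan (n : ℕ) (E : Finset (Fin n × Fin n)) (K : Fin n × Fin n → ℕ) (m : ℕ) :
    Submodule ℂ (MvPolynomial (Fin n) ℂ) :=
  Submodule.span ℂ
    {H | ∃ K' : Fin n × Fin n → ℕ, (∀ p, K' p ≤ K p) ∧ (∀ p ∉ E, K' p = 0) ∧
      (∑ p ∈ E, K' p = m) ∧ H = Hpoly n E K'}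

/-- `⟨f,g⟩ = ∑_K K! coe(x^K,f) conj(coe(x^K,g))`. -/
noncomputable def innerW (n : ℕ) (f g : MvPolynomial (Fin n) ℂ) : ℂ :=
  ∑ᶠ K : Fin n →₀ ℕ,
    (∏ j, Nat.factorial (K j) : ℕ) * coeff K f * conj (coeff K g)

/- ### auxiliary lemmas -/

lemma innerW_term_support (n : ℕ) (f g : MvPolynomial (Fin n) ℂ) :
    (Function.support fun K : Fin n →₀ ℕ =>
      ((∏ j, Nat.factorial (K j) : ℕ) : ℂ) * coeff K f * conj (coeff K g)).Finite := by
  apply Set.Finite.subset f.support.finite_toSet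
  intro K hK
  simp only [Function.mem_support] at hK
  simp only [Finset.coe_sort_coe, Finset.mem_coe, MvPolynomial.mem_support_iff]
  intro h0
  apply hK
  rw [h0, mul_zero, zero_mul]

lemma innerW_zero_left (n : ℕ) (g : MvPolynomial (Fin n) ℂ) : innerW n 0 g = 0 := by
  unfold innerW; simp

lemma innerW_zero_right (n : ℕ) (f : MvPolynomial (Fin n) ℂ) : innerW n f 0 = 0 := by
  unfold innerW; simp

lemma innerW_add_left (n : ℕ) (f g h : MvPolynomial (Fin n) ℂ) :
    innerW n (f + g) h = innerW n f h + innerW n g h := by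
  unfold innerW
  rw [← finsum_add_distrib (innerW_term_support n f h) (innerW_term_support n g h)]
  apply finsum_congr; intro K
  rw [coeff_add]; ring

lemma innerW_add_right (n : ℕ) (f g h : MvPolynomial (Fin n) ℂ) :
    innerW n f (g + h) = innerW n f g + innerW n f h := by
  unfold innerW
  rw [← finsum_add_distrib (innerW_term_support n f g) (innerW_term_support n f h)]
  apply finsum_congr; intro K
  rw [coeff_add, map_add]; ring

lemma innerW_sub_left (n : ℕ) (f g h : MvPolynomial (Fin n) ℂ) :
    innerW n (f - g) h = innerW n f h - innerW n g h := by
  have := innerW_add_left n (f - g) g h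
  rw [sub_add_cancel] at this
  rw [this]; ring

lemma innerW_sub_right (n : ℕ) (f g h : MvPolynomial (Fin n) ℂ) :
    innerW n f (g - h) = innerW n f g - innerW n f h := by
  have := innerW_add_right n f (g - h) h
  rw [sub_add_cancel] at this
  rw [this]; ring

lemma innerW_sum_left {α : Type*} (n : ℕ) (s : Finset α) (F : α → MvPolynomial (Fin n) ℂ)
    (g : MvPolynomial (Fin n) ℂ) :
    innerW n (∑ k ∈ s, F k) g = ∑ k ∈ s, innerW n (F k) g := by
  classical
  induction s using Finset.induction_on with
  | empty => simp [innerW_zero_left]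
  | insert _ _ hp ih =>
    rw [Finset.sum_insert hp, Finset.sum_insert hp, innerW_add_left, ih]

lemma innerW_sum_right {α : Type*} (n : ℕ) (s : Finset α) (f : MvPolynomial (Fin n) ℂ)
    (G : α → MvPolynomial (Fin n) ℂ) :
    innerW n f (∑ k ∈ s, G k) = ∑ k ∈ s, innerW n f (G k) := by
  classical
  induction s using Finset.induction_on with
  | empty => simp [innerW_zero_right]
  | insert _ _ hp ih =>
    rw [Finset.sum_insert hp, Finset.sum_insert hp, innerW_add_right, ih]

lemma innerW_monomial_monomial (n : ℕ) (A B : Fin n →₀ ℕ) (a b : ℂ) :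
    innerW n (monomial A a) (monomial B b) =
      if A = B then ((∏ j, Nat.factorial (A j) : ℕ) : ℂ) * a * conj b else 0 := by
  classical
  unfold innerW
  rw [finsum_eq_single _ A]
  · rw [coeff_monomial, coeff_monomial, if_pos rfl]
    by_cases h : A = B
    · rw [if_pos h.symm, if_pos h]
    · rw [if_neg (fun hh => h hh.symm), if_neg h, map_zero, mul_zero]
  · intro K hK
    rw [coeff_monomial, if_neg (fun hh => hK hh.symm), mul_zero, zero_mul]

lemma factorial_prod_add_single (n : ℕ) (A B : Fin n →₀ ℕ) (i : Fin n)
    (hAi : A i = B i + 1) (hAj : ∀ j, j ≠ i → A j = B j) :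
    (∏ j, Nat.factorial (A j)) = (B i + 1) * ∏ j, Nat.factorial (B j) := by
  classical
  rw [← Finset.mul_prod_erase Finset.univ (fun j => Nat.factorial (A j)) (Finset.mem_univ i),
      ← Finset.mul_prod_erase Finset.univ (fun j => Nat.factorial (B j)) (Finset.mem_univ i)]
  rw [hAi, Nat.factorial_succ, mul_assoc]
  congr 1
  congr 1
  apply Finset.prod_congr rfl
  intro j hj
  rw [hAj j (Finset.ne_of_mem_erase hj)]

lemma innerW_monomial_adj (n : ℕ) (i : Fin n) (A B : Fin n →₀ ℕ) (a b : ℂ) :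
    innerW n (monomial A a) (monomial B b * X i) =
      innerW n (pderiv i (monomial A a)) (monomial B b) := by
  classical
  have hmul : (monomial B b : MvPolynomial (Fin n) ℂ) * X i
      = monomial (B + Finsupp.single i 1) b := by
    rw [X, monomial_mul, mul_one]
  rw [hmul, pderiv_monomial, innerW_monomial_monomial, innerW_monomial_monomial]
  by_cases hAi : A i = 0
  · have hL : ¬(A = B + Finsupp.single i 1) := by
      intro h
      have := congrArg (fun F => F i) h
      simp only [Finsupp.add_apply, Finsupp.single_eq_same] at this
      omega
    rw [if_neg hL, hAi]
    split_ifs with h2 <;> simp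
  · have hle : Finsupp.single i 1 ≤ A := by
      rw [Finsupp.single_le_iff]; omega
    have hiff : (A - Finsupp.single i 1 = B) ↔ (A = B + Finsupp.single i 1) := by
      constructor
      · intro h; rw [← h, tsub_add_cancel_of_le hle]
      · intro h; rw [h, add_tsub_cancel_right]
    by_cases h : A = B + Finsupp.single i 1
    · have hB : A - Finsupp.single i 1 = B := hiff.mpr h
      have hAiB : A i = B i + 1 := by
        have := congrArg (fun F => F i) h
        simpa using this
      have hAj : ∀ j, j ≠ i → A j = B j := by
        intro j hj
        have := congrArg (fun F => F j) h
        simpa [Finsupp.single_apply, Ne.symm hj] using this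
      have hfac : (∏ j, Nat.factorial (A j)) = (B i + 1) * ∏ j, Nat.factorial (B j) :=
        factorial_prod_add_single n A B i hAiB hAj
      rw [if_pos h, if_pos hB, hB, hfac, hAiB]
      push_cast
      ring
    · rw [if_neg h, if_neg (fun hh => h (hiff.mp hh))]

lemma innerW_mul_X (n : ℕ) (i : Fin n) (f g : MvPolynomial (Fin n) ℂ) :
    innerW n f (g * X i) = innerW n (pderiv i f) g := by
  classical
  conv_lhs => rw [f.as_sum, g.as_sum]
  conv_rhs => rw [f.as_sum, g.as_sum]
  rw [Finset.sum_mul, map_sum, innerW_sum_left, innerW_sum_left]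
  apply Finset.sum_congr rfl
  intro A _
  rw [innerW_sum_right, innerW_sum_right]
  apply Finset.sum_congr rfl
  intro B _
  exact innerW_monomial_adj n i A B _ _

lemma innerW_mul_sub_X (n : ℕ) (i j : Fin n) (f g : MvPolynomial (Fin n) ℂ) :
    innerW n f (g * (X i - X j)) = innerW n (pderiv i f - pderiv j f) g := by
  rw [mul_sub, innerW_sub_right, innerW_mul_X, innerW_mul_X, innerW_sub_left]

lemma pderiv_finset_prod {α : Type*} [DecidableEq α] (n : ℕ) (i : Fin n) (s : Finset α)
    (f : α → MvPolynomial (Fin n) ℂ) :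
    pderiv i (∏ a ∈ s, f a) = ∑ a ∈ s, pderiv i (f a) * ∏ b ∈ s.erase a, f b := by
  classical
  induction s using Finset.induction_on with
  | empty => simp
  | @insert a s hp ih =>
    rw [Finset.prod_insert hp, pderiv_mul, ih, Finset.sum_insert hp,
        Finset.erase_insert hp, Finset.mul_sum]
    congr 1
    apply Finset.sum_congr rfl
    intro x hx
    have hxa : a ≠ x := fun h => hp (h ▸ hx)
    rw [Finset.erase_insert_of_ne hxa, Finset.prod_insert
      (fun h => hp (Finset.mem_of_mem_erase h))]
    ring

lemma pderiv_Hpoly_mem (n : ℕ) (E : Finset (Fin n × Fin n)) (K : Fin n × Fin n → ℕ)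
    (i : Fin n) (m : ℕ) (K' : Fin n × Fin n → ℕ)
    (hle : ∀ p, K' p ≤ K p) (h0 : ∀ p ∉ E, K' p = 0) (hsum : ∑ p ∈ E, K' p = m + 1) :
    pderiv i (Hpoly n E K') ∈ Wspan n E K m := by
  classical
  rw [Hpoly, pderiv_finset_prod n i E]
  apply Submodule.sum_mem
  intro q hq
  rcases Nat.eq_zero_or_pos (K' q) with h0q | hpos
  · rw [h0q]
    simp only [pow_zero, Derivation.map_one_eq_zero, zero_mul]
    exact Submodule.zero_mem _
  obtain ⟨t, ht⟩ : ∃ t, K' q = t + 1 := ⟨K' q - 1, (Nat.succ_pred_eq_of_pos hpos).symm⟩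
  set d : ℂ := (if q.1 = i then (1 : ℂ) else 0) + (if q.2 = i then (1 : ℂ) else 0) with hd
  have hcd : pderiv i (X q.1 + X q.2 : MvPolynomial (Fin n) ℂ) = C d := by
    rw [map_add, hd, map_add]
    congr 1
    · by_cases h : q.1 = i
      · subst h; rw [pderiv_X_self, if_pos rfl, map_one]
      · rw [pderiv_X_of_ne h, if_neg h, map_zero]
    · by_cases h : q.2 = i
      · subst h; rw [pderiv_X_self, if_pos rfl, map_one]
      · rw [pderiv_X_of_ne h, if_neg h, map_zero]
  have hHup : Hpoly n E (Function.update K' q t)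
      = (X q.1 + X q.2) ^ t * ∏ p ∈ E.erase q, (X p.1 + X p.2) ^ K' p := by
    rw [Hpoly, ← Finset.mul_prod_erase E _ hq, Function.update_self]
    congr 1
    apply Finset.prod_congr rfl
    intro p hp
    rw [Function.update_of_ne (Finset.ne_of_mem_erase hp)]
  have hterm : pderiv i ((X q.1 + X q.2 : MvPolynomial (Fin n) ℂ) ^ K' q)
      * ∏ p ∈ E.erase q, (X p.1 + X p.2) ^ K' p
      = (((K' q : ℂ)) * d) • Hpoly n E (Function.update K' q t) := by
    rw [Derivation.leibniz_pow, hcd, hHup, ht]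
    simp only [Nat.add_sub_cancel, nsmul_eq_mul, smul_eq_mul, smul_eq_C_mul, C_mul,
      Nat.cast_add, Nat.cast_one, map_natCast, map_add, map_one]
    ring
  rw [hterm]
  apply Submodule.smul_mem
  apply Submodule.subset_span
  refine ⟨Function.update K' q t, ?_, ?_, ?_, rfl⟩
  · intro p
    by_cases hpq : p = q
    · subst hpq; rw [Function.update_self]; calc t ≤ K' p := by omega
        _ ≤ K p := hle p
    · rw [Function.update_of_ne hpq]; exact hle p
  · intro p hp
    have hpq : p ≠ q := by intro he; rw [he] at hp; exact hp hq
    rw [Function.update_of_ne hpq]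
    exact h0 p hp
  · rw [Finset.sum_update_of_mem hq]
    have h2 : K' q + ∑ p ∈ E.erase q, K' p = m + 1 := by
      rw [Finset.add_sum_erase _ _ hq, hsum]
    rw [Finset.erase_eq] at h2
    omega

lemma deriv_mem_span (n : ℕ) (E : Finset (Fin n × Fin n)) (K : Fin n × Fin n → ℕ)
    (i j : Fin n) (m : ℕ) (F : MvPolynomial (Fin n) ℂ) (hF : F ∈ Wspan n E K (m + 1)) :
    pderiv i F - pderiv j F ∈ Wspan n E K m := by
  unfold Wspan at hF
  induction hF using Submodule.span_induction with
  | mem x hx =>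
    obtain ⟨K', hle, h0, hsum, rfl⟩ := hx
    exact Submodule.sub_mem _ (pderiv_Hpoly_mem n E K i m K' hle h0 hsum)
      (pderiv_Hpoly_mem n E K j m K' hle h0 hsum)
  | zero => simp only [map_zero, sub_zero]; exact Submodule.zero_mem _
  | add x y hx hy hx' hy' =>
    have : pderiv i (x + y) - pderiv j (x + y)
        = (pderiv i x - pderiv j x) + (pderiv i y - pderiv j y) := by
      rw [map_add, map_add]; ring
    rw [this]; exact Submodule.add_mem _ hx' hy'
  | smul c x hx hx' =>
    have : pderiv i (c • x) - pderiv j (c • x) = c • (pderiv i x - pderiv j x) := by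
      rw [Derivation.map_smul, Derivation.map_smul, smul_sub]
    rw [this]; exact Submodule.smul_mem _ _ hx'

lemma key_lemma (n : ℕ) (E : Finset (Fin n × Fin n)) (K : Fin n × Fin n → ℕ)
    (S : Finset (Fin n × Fin n)) :
    ∀ F : MvPolynomial (Fin n) ℂ, F ∈ Wspan n E K (E.card + S.card) →
    ∃ F' ∈ Wspan n E K E.card,
      innerW n F' (Qpoly n E) = innerW n F (Qpoly n E * Qpoly n S) := by
  classical
  induction S using Finset.induction_on with
  | empty =>
    intro F hF
    refine ⟨F, by simpa using hF, ?_⟩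
    simp [Qpoly]
  | @insert a s hp ih =>
    intro F hF
    have hcard : E.card + (insert a s).card = (E.card + s.card) + 1 := by
      rw [Finset.card_insert_of_notMem hp]; ring
    rw [hcard] at hF
    set G := pderiv a.1 F - pderiv a.2 F with hG
    have hGmem : G ∈ Wspan n E K (E.card + s.card) :=
      deriv_mem_span n E K a.1 a.2 _ F hF
    obtain ⟨F', hF', heq⟩ := ih G hGmem
    refine ⟨F', hF', ?_⟩
    rw [heq, hG, ← innerW_mul_sub_X]
    congr 1
    show Qpoly n E * Qpoly n s * (X a.1 - X a.2) = Qpoly n E * Qpoly n (insert a s)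
    have : Qpoly n (insert a s) = (X a.1 - X a.2) * Qpoly n s := by
      rw [Qpoly, Finset.prod_insert hp]; rfl
    rw [this]; ring

/-- Lemma 6.1: if some `F ∈ W_{E,|E'|}^K` pairs nontrivially with `Q_{E'}`, then some
`F' ∈ W_{E,|E|}^K` pairs nontrivially with `Q_E`. -/
theorem stmt12 (n : ℕ) (E E' : Finset (Fin n × Fin n)) (hEE' : E ⊆ E')
    (horder : ∀ p ∈ E', p.1 < p.2)
    (K : Fin n × Fin n → ℕ)
    (F : MvPolynomial (Fin n) ℂ) (hF : F ∈ Wspan n E K E'.card)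
    (h : innerW n F (Qpoly n E') ≠ 0) :
    ∃ F' ∈ Wspan n E K E.card, innerW n F' (Qpoly n E) ≠ 0 := by
  classical
  have hunion : E ∪ (E' \ E) = E' := Finset.union_sdiff_of_subset hEE'
  have hdisj : Disjoint E (E' \ E) := Finset.disjoint_sdiff
  have hcard : E'.card = E.card + (E' \ E).card := by
    rw [← Finset.card_union_of_disjoint hdisj, hunion]
  have hQ : Qpoly n E' = Qpoly n E * Qpoly n (E' \ E) := by
    rw [Qpoly, Qpoly, Qpoly, ← Finset.prod_union hdisj, hunion]
  rw [hcard] at hF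
  obtain ⟨F', hF', heq⟩ := key_lemma n E K (E' \ E) F hF
  refine ⟨F', hF', ?_⟩
  rw [heq, ← hQ]
  exact h
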